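/- Let B be a real symmetric 3×3 matrix of the form B = [[a,d,e],[d,b,f],[e,f,c]], and let B₂ = diag(0,0,1). If the discriminant of the characteristic polynomial of B + t·B₂ vanishes for all real t, then a = b, d = 0, e = 0, and f = 0; that is, B = diag(a,a,c). -/
import Mathlib

open Polynomial Matrix

/-- The discriminant of a monic cubic polynomial `λ³ + p λ² + q λ + r`,
expressed through its coefficients. -/
noncomputable def cubicDiscrim (P : Polynomial ℝ) : ℝ :=
  let p := P.coeff 2
  let q := P.coeff 1
  let r := P.coeff 0
  18 * p * q * r - 4 * p ^ 3 * r + p ^ 2 * q ^ 2 - 4 * q ^ 3 - 27 * r ^ 2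

lemma charpoly_fin3' (x11 x12 x13 x21 x22 x23 x31 x32 x33 : ℝ) :
    (!![x11,x12,x13;x21,x22,x23;x31,x32,x33]).charpoly =
    X^3 - C (x11+x22+x33) * X^2
      + C (x11*x22+x11*x33+x22*x33-x12*x21-x13*x31-x23*x32) * X
      - C (x11*x22*x33+x12*x23*x31+x13*x21*x32-x13*x22*x31-x12*x21*x33-x11*x23*x32) := by
  rw [Matrix.charpoly, Matrix.det_fin_three]
  simp [Matrix.charmatrix_apply, _root_.map_add, _root_.map_mul, _root_.map_sub]
  ring

lemma coeff2' (p q r : ℝ) : (X^3 - C p * X^2 + C q * X - C r).coeff 2 = -p := by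
  simp [coeff_X_pow]

lemma coeff1' (p q r : ℝ) : (X^3 - C p * X^2 + C q * X - C r).coeff 1 = q := by
  simp [coeff_X_pow]

lemma coeff0' (p q r : ℝ) : (X^3 - C p * X^2 + C q * X - C r).coeff 0 = -r := by
  simp [coeff_X_pow]

theorem vanishing_discriminant_forces_diagonal
    (a b c d e f : ℝ)
    (B : Matrix (Fin 3) (Fin 3) ℝ)
    (hB : B = !![a, d, e; d, b, f; e, f, c])
    (B₂ : Matrix (Fin 3) (Fin 3) ℝ)
    (hB₂ : B₂ = Matrix.diagonal ![0, 0, 1])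
    (hdisc : ∀ t : ℝ, cubicDiscrim (B + t • B₂).charpoly = 0) :
    a = b ∧ d = 0 ∧ e = 0 ∧ f = 0 := by
  subst hB hB₂
  have key : ∀ t : ℝ, (!![a, d, e; d, b, f; e, f, c] + t • Matrix.diagonal ![0, 0, 1])
      = !![a, d, e; d, b, f; e, f, c + t] := by
    intro t
    ext i j
    fin_cases i <;> fin_cases j <;>
      simp [Matrix.diagonal, Matrix.add_apply, Matrix.smul_apply]
  have hD : ∀ t : ℝ,
      18 * (-(a+b+(c+t))) * (a*b+a*(c+t)+b*(c+t)-d*d-e*e-f*f) *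
        (-(a*b*(c+t)+2*d*e*f-b*e*e-d*d*(c+t)-a*f*f))
      - 4 * (-(a+b+(c+t)))^3 * (-(a*b*(c+t)+2*d*e*f-b*e*e-d*d*(c+t)-a*f*f))
      + (-(a+b+(c+t)))^2 * (a*b+a*(c+t)+b*(c+t)-d*d-e*e-f*f)^2
      - 4 * (a*b+a*(c+t)+b*(c+t)-d*d-e*e-f*f)^3
      - 27 * (-(a*b*(c+t)+2*d*e*f-b*e*e-d*d*(c+t)-a*f*f))^2 = 0 := by
    intro t
    have h := hdisc t
    rw [key t, charpoly_fin3'] at h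
    simp only [cubicDiscrim, coeff2', coeff1', coeff0'] at h
    linear_combination h
  have h4 : (a-b)^2 + 4*d^2 = 0 := by
    linear_combination (1/24) * (hD 2) + (1/24) * (hD (-2)) - (1/6) * (hD 1)
      - (1/6) * (hD (-1)) + (1/4) * (hD 0)
  have hd : d = 0 := by nlinarith [sq_nonneg (a - b), sq_nonneg d]
  have hab : a = b := by nlinarith [sq_nonneg (a - b), sq_nonneg d]
  subst hab hd
  have hE := hD (a - c + 1)
  have hs : e^2 + f^2 = 0 := by
    nlinarith [hE, sq_nonneg e, sq_nonneg f, sq_nonneg (e^2 + f^2), sq_nonneg (e*f)]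
  have he : e = 0 := by
    have : e ^ 2 = 0 := by nlinarith [sq_nonneg f]
    exact sq_eq_zero_iff.mp this
  have hf : f = 0 := by
    have : f ^ 2 = 0 := by nlinarith [sq_nonneg e]
    exact sq_eq_zero_iff.mp this
  exact ⟨rfl, rfl, he, hf⟩
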